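/- For all Lagrangian planes ℓ, ℓ', ℓ'' in (ℝ^{2n},σ), the signature satisfies τ(ℓ,ℓ',ℓ'') ≡ n + dim(ℓ∩ℓ') - dim(ℓ∩ℓ'') + dim(ℓ'∩ℓ'') (mod 2). -/
import Mathlib


open Matrix Complex

noncomputable section

/-- Phase space ℝ^{2n} = ℝ^n_x × ℝ^n_p. -/
abbrev V (n : ℕ) := (Fin n → ℝ) × (Fin n → ℝ)

/-- Standard symplectic form σ(z,z') = p·x' - p'·x. -/
def Omega (n : ℕ) (z w : V n) : ℝ := z.2 ⬝ᵥ w.1 - w.2 ⬝ᵥ z.1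

/-- Lagrangian plane: n-dimensional subspace on which σ vanishes. -/
def IsLagrangian (n : ℕ) (L : Submodule ℝ (V n)) : Prop :=
  Module.finrank ℝ L = n ∧ ∀ z ∈ L, ∀ w ∈ L, Omega n z w = 0

/-- Symplectic linear map. -/
def IsSymplectic (n : ℕ) (S : V n →ₗ[ℝ] V n) : Prop :=
  Function.Bijective S ∧ ∀ z w, Omega n (S z) (S w) = Omega n z w

/-- Dimension of a maximal subspace on which Q is positive. -/
def posIndex {E : Type*} [AddCommGroup E] [Module ℝ E] (Q : E → ℝ) : ℕ :=
  sSup {k | ∃ W : Submodule ℝ E, Module.finrank ℝ W = k ∧ ∀ v ∈ W, v ≠ 0 → 0 < Q v}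

def negIndex {E : Type*} [AddCommGroup E] [Module ℝ E] (Q : E → ℝ) : ℕ :=
  posIndex fun v => -Q v

/-- σ(z,z') + σ(z',z'') + σ(z'',z) on ℓ × ℓ' × ℓ''. -/
def tripleForm (n : ℕ) (L L' L'' : Submodule ℝ (V n)) : (L × L' × L'') → ℝ :=
  fun t => Omega n t.1 t.2.1 + Omega n t.2.1 t.2.2 + Omega n t.2.2 t.1

/-- Kashiwara signature τ(ℓ,ℓ',ℓ''). -/
def tau (n : ℕ) (L L' L'' : Submodule ℝ (V n)) : ℤ :=
  (posIndex (tripleForm n L L' L'') : ℤ) - negIndex (tripleForm n L L' L'')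

/-- ∂dim(ℓ,ℓ',ℓ''). -/
def ddim (n : ℕ) (L L' L'' : Submodule ℝ (V n)) : ℤ :=
  (Module.finrank ℝ ↥(L ⊓ L') : ℤ) - Module.finrank ℝ ↥(L ⊓ L'')
    + Module.finrank ℝ ↥(L' ⊓ L'')

/-- Index of inertia. -/
def Inert (n : ℕ) (L L' L'' : Submodule ℝ (V n)) : ℤ :=
  (tau n L L' L'' - ddim n L L' L'' + n) / 2

/-- Real and imaginary parts of a complex matrix. -/
def reM (n : ℕ) (u : Matrix (Fin n) (Fin n) ℂ) : Matrix (Fin n) (Fin n) ℝ :=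
  of fun i j => (u i j).re

def imM (n : ℕ) (u : Matrix (Fin n) (Fin n) ℂ) : Matrix (Fin n) (Fin n) ℝ :=
  of fun i j => (u i j).im

/-- The identification A+iB ↦ [[A,-B],[B,A]] acting on ℝ^{2n}. -/
def uReal (n : ℕ) (u : Matrix (Fin n) (Fin n) ℂ) : V n →ₗ[ℝ] V n where
  toFun z := (reM n u *ᵥ z.1 - imM n u *ᵥ z.2, imM n u *ᵥ z.1 + reM n u *ᵥ z.2)
  map_add' a b := by
    ext i <;> (simp [Matrix.mulVec_add]; try ring)
  map_smul' c a := by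
    ext i <;> (simp [Matrix.mulVec_smul]; try ring)

/-- The momentum plane ℓ_p = 0 × ℝ^n. -/
def ellP (n : ℕ) : Submodule ℝ (V n) := Submodule.prod ⊥ ⊤


section AuxSylvester

open Module Finset

/-! ### Generalities about `posIndex` -/

lemma posIndex_eq_of {E : Type*} [AddCommGroup E] [Module ℝ E] (Q : E → ℝ) (k : ℕ)
    (W₀ : Submodule ℝ E) (h₀ : Module.finrank ℝ W₀ = k)
    (hpos : ∀ v ∈ W₀, v ≠ 0 → 0 < Q v)
    (hbd : ∀ W : Submodule ℝ E, (∀ v ∈ W, v ≠ 0 → 0 < Q v) → Module.finrank ℝ W ≤ k) :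
    posIndex Q = k := by
  have hk : k ∈ {j | ∃ W : Submodule ℝ E, Module.finrank ℝ W = j ∧ ∀ v ∈ W, v ≠ 0 → 0 < Q v} :=
    ⟨W₀, h₀, hpos⟩
  have hub : k ∈ upperBounds
      {j | ∃ W : Submodule ℝ E, Module.finrank ℝ W = j ∧ ∀ v ∈ W, v ≠ 0 → 0 < Q v} := by
    rintro j ⟨W, rfl, hW⟩
    exact hbd W hW
  exact le_antisymm (csSup_le ⟨k, hk⟩ hub) (le_csSup ⟨k, hub⟩ hk)

lemma posIndex_comp_equiv {E F : Type*} [AddCommGroup E] [Module ℝ E] [AddCommGroup F]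
    [Module ℝ F] (f : E ≃ₗ[ℝ] F) (Q : F → ℝ) :
    posIndex (fun x => Q (f x)) = posIndex Q := by
  unfold posIndex
  congr 1
  ext k
  constructor
  · rintro ⟨W, hWk, hW⟩
    refine ⟨W.map (f : E →ₗ[ℝ] F), by rw [LinearEquiv.finrank_map_eq]; exact hWk, ?_⟩
    rintro v hv hv0
    rw [Submodule.mem_map] at hv
    obtain ⟨u, hu, rfl⟩ := hv
    have hu0 : u ≠ 0 := by rintro rfl; simp at hv0
    exact hW u hu hu0
  · rintro ⟨W, hWk, hW⟩
    refine ⟨W.map (f.symm : F →ₗ[ℝ] E), by rw [LinearEquiv.finrank_map_eq]; exact hWk, ?_⟩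
    rintro v hv hv0
    rw [Submodule.mem_map] at hv
    obtain ⟨u, hu, rfl⟩ := hv
    have hu0 : u ≠ 0 := by rintro rfl; simp at hv0
    simpa using hW u hu hu0

/-! ### Coordinate subspaces -/

def coordSub {m : ℕ} (s : Finset (Fin m)) : Submodule ℝ (Fin m → ℝ) where
  carrier := {v | ∀ i, i ∉ s → v i = 0}
  add_mem' := fun ha hb i hi => by simp [ha i hi, hb i hi]
  zero_mem' := fun i _ => rfl
  smul_mem' := fun c v hv i hi => by simp [hv i hi]

lemma mem_coordSub {m : ℕ} {s : Finset (Fin m)} {v : Fin m → ℝ} :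
    v ∈ coordSub s ↔ ∀ i, i ∉ s → v i = 0 := Iff.rfl

noncomputable def coordSubEquiv {m : ℕ} (s : Finset (Fin m)) :
    coordSub s ≃ₗ[ℝ] ({ i // i ∈ s } → ℝ) where
  toFun v j := v.1 j.1
  map_add' _ _ := rfl
  map_smul' _ _ := rfl
  invFun u := ⟨fun i => if h : i ∈ s then u ⟨i, h⟩ else 0, fun i hi => dif_neg hi⟩
  left_inv v := Subtype.ext (funext fun i => by
    by_cases h : i ∈ s
    · simp [h]
    · simp [h, (v.2 i h).symm])
  right_inv u := funext fun j => by simp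

lemma finrank_coordSub {m : ℕ} (s : Finset (Fin m)) :
    Module.finrank ℝ (coordSub s) = s.card := by
  rw [(coordSubEquiv s).finrank_eq]
  simp [Module.finrank_pi]

/-! ### Weighted sums of squares -/

lemma polar_wss {m : ℕ} (w : Fin m → ℝ) (v y : Fin m → ℝ) :
    QuadraticMap.polar (⇑(QuadraticMap.weightedSumSquares ℝ w)) v y
      = ∑ i, w i * (2 * v i * y i) := by
  simp only [QuadraticMap.polar, QuadraticMap.weightedSumSquares_apply, smul_eq_mul,
    Pi.add_apply, ← Finset.sum_sub_distrib]
  exact Finset.sum_congr rfl fun i _ => by ring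

lemma posIndex_wss {m : ℕ} (w : Fin m → ℝ) (hw : ∀ i, w i = -1 ∨ w i = 0 ∨ w i = 1) :
    posIndex ⇑(QuadraticMap.weightedSumSquares ℝ w)
      = (Finset.univ.filter fun i => w i = 1).card := by
  classical
  apply posIndex_eq_of _ _ (coordSub (Finset.univ.filter fun i => w i = 1)) (finrank_coordSub _)
  · intro v hv hv0
    rw [QuadraticMap.weightedSumSquares_apply]
    apply Finset.sum_pos'
    · intro i _
      by_cases h : i ∈ Finset.univ.filter fun i => w i = 1
      · have h1 : w i = 1 := (Finset.mem_filter.mp h).2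
        simp [h1, mul_self_nonneg]
      · simp [hv i h]
    · obtain ⟨i, hi⟩ := Function.ne_iff.mp hv0
      have hi' : i ∈ Finset.univ.filter fun i => w i = 1 := by
        by_contra h
        exact hi (hv i h)
      have h1 : w i = 1 := (Finset.mem_filter.mp hi').2
      refine ⟨i, Finset.mem_univ i, ?_⟩
      have : v i ≠ 0 := by simpa using hi
      simp [h1, mul_self_pos.mpr this]
  · intro W hW
    set C := coordSub (Finset.univ.filter fun i => ¬ w i = 1) with hC
    have hdisj : W ⊓ C = ⊥ := by
      rw [Submodule.eq_bot_iff]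
      rintro v ⟨hvW, hvC⟩
      by_contra hv0
      have h1 : 0 < QuadraticMap.weightedSumSquares ℝ w v := hW v hvW hv0
      have h2 : QuadraticMap.weightedSumSquares ℝ w v ≤ 0 := by
        rw [QuadraticMap.weightedSumSquares_apply]
        apply Finset.sum_nonpos
        intro i _
        by_cases h : w i = 1
        · have : v i = 0 := hvC i (by simp [h])
          simp [this]
        · rcases hw i with h' | h' | h'
          · have := mul_self_nonneg (v i)
            simp only [h', smul_eq_mul]
            nlinarith
          · simp [h']
          · exact absurd h' h
      linarith
    have hle := Submodule.finrank_sup_add_finrank_inf_eq W C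
    rw [hdisj, finrank_bot] at hle
    have hCc : Module.finrank ℝ C = (Finset.univ.filter fun i => ¬ w i = 1).card :=
      finrank_coordSub _
    have hsup : Module.finrank ℝ ↥(W ⊔ C) ≤ m := by
      have h := Submodule.finrank_le (W ⊔ C)
      simpa [Module.finrank_pi] using h
    have hcards := Finset.card_filter_add_card_filter_not
      (s := (Finset.univ : Finset (Fin m))) (p := fun i => w i = 1)
    simp only [Finset.card_univ, Fintype.card_fin] at hcards
    omega

lemma ker_polarBilin_wss {m : ℕ} (w : Fin m → ℝ) :
    LinearMap.ker (QuadraticMap.weightedSumSquares ℝ w).polarBilin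
      = coordSub (Finset.univ.filter fun i => w i = 0) := by
  classical
  ext v
  rw [LinearMap.mem_ker, mem_coordSub]
  constructor
  · intro h i hi
    have hwi : w i ≠ 0 := by simpa using hi
    have h0 : QuadraticMap.polar (⇑(QuadraticMap.weightedSumSquares ℝ w)) v (Pi.single i 1)
        = 0 := by
      rw [← QuadraticMap.polarBilin_apply_apply, h, LinearMap.zero_apply]
    rw [polar_wss] at h0
    rw [Finset.sum_eq_single i (fun j _ hj => by simp [Pi.single_eq_of_ne hj])
      (fun h => absurd (Finset.mem_univ i) h)] at h0
    simp only [Pi.single_eq_same, mul_one] at h0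
    rcases mul_eq_zero.mp h0 with h' | h'
    · exact absurd h' hwi
    · linarith
  · intro h
    refine LinearMap.ext fun y => ?_
    rw [QuadraticMap.polarBilin_apply_apply, LinearMap.zero_apply, polar_wss]
    apply Finset.sum_eq_zero
    intro j _
    by_cases hj : w j = 0
    · simp [hj]
    · have : v j = 0 := h j (by simpa using hj)
      simp [this]

/-! ### Sylvester-type rank identity -/

lemma sylvester_rank {E : Type*} [AddCommGroup E] [Module ℝ E] [FiniteDimensional ℝ E]
    (Q : QuadraticForm ℝ E) :
    posIndex ⇑Q + negIndex ⇑Q + Module.finrank ℝ (LinearMap.ker Q.polarBilin)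
      = Module.finrank ℝ E := by
  classical
  obtain ⟨w, hw, ⟨iso⟩⟩ := Q.equivalent_one_zero_neg_one_weighted_sum_squared
  set Wd := QuadraticMap.weightedSumSquares ℝ w with hWd
  let f : E ≃ₗ[ℝ] (Fin (Module.finrank ℝ E) → ℝ) := iso.toLinearEquiv
  have happ : ∀ x, Wd (f x) = Q x := fun x => iso.map_app x
  have hQ : ⇑Q = fun x => Wd (f x) := funext fun x => (happ x).symm
  have hpos : posIndex ⇑Q = (Finset.univ.filter fun i => w i = 1).card := by
    rw [hQ, posIndex_comp_equiv f ⇑Wd, posIndex_wss w hw]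
  have hneg : negIndex ⇑Q = (Finset.univ.filter fun i => w i = -1).card := by
    unfold negIndex
    have h1 : (fun v => -Q v)
        = fun x => (⇑(QuadraticMap.weightedSumSquares ℝ (-w))) (f x) := by
      funext x
      rw [← happ x, hWd]
      simp only [QuadraticMap.weightedSumSquares_apply, smul_eq_mul, Pi.neg_apply, neg_mul,
        ← Finset.sum_neg_distrib]
    have hw' : ∀ i, (-w) i = -1 ∨ (-w) i = 0 ∨ (-w) i = 1 := by
      intro i
      rcases hw i with h | h | h <;> simp [h]
    rw [h1, posIndex_comp_equiv f, posIndex_wss (-w) hw']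
    congr 1
    apply Finset.filter_congr
    intro i _
    constructor <;> intro h <;> (simp only [Pi.neg_apply] at *; linarith)
  have hker : Module.finrank ℝ (LinearMap.ker Q.polarBilin)
      = (Finset.univ.filter fun i => w i = 0).card := by
    have hpolar : ∀ a b, QuadraticMap.polar ⇑Q a b
        = QuadraticMap.polar ⇑Wd (f a) (f b) := by
      intro a b
      simp [QuadraticMap.polar, ← happ, map_add]
    have hmap : (LinearMap.ker Q.polarBilin).map (f : E →ₗ[ℝ] _)
        = LinearMap.ker Wd.polarBilin := by
      ext y
      rw [Submodule.mem_map_equiv, LinearMap.mem_ker, LinearMap.mem_ker]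
      constructor
      · intro h
        refine LinearMap.ext fun u => ?_
        rw [LinearMap.zero_apply, QuadraticMap.polarBilin_apply_apply]
        have h2 : QuadraticMap.polar ⇑Q (f.symm y) (f.symm u) = 0 := by
          rw [← QuadraticMap.polarBilin_apply_apply, h, LinearMap.zero_apply]
        rw [hpolar] at h2
        simpa using h2
      · intro h
        refine LinearMap.ext fun b => ?_
        rw [LinearMap.zero_apply, QuadraticMap.polarBilin_apply_apply, hpolar,
          f.apply_symm_apply, ← QuadraticMap.polarBilin_apply_apply, h, LinearMap.zero_apply]
    rw [← LinearEquiv.finrank_map_eq f (LinearMap.ker Q.polarBilin), hmap,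
      ker_polarBilin_wss, finrank_coordSub]
  rw [hpos, hneg, hker]
  have h2 := Finset.card_filter_add_card_filter_not
    (s := (Finset.univ : Finset (Fin (Module.finrank ℝ E)))) (p := fun i => w i = 1)
  have h3 : Finset.univ.filter (fun i => ¬ w i = 1)
      = Finset.univ.filter (fun i => w i = -1) ∪ Finset.univ.filter (fun i => w i = 0) := by
    ext i
    simp only [Finset.mem_filter, Finset.mem_union, Finset.mem_univ, true_and]
    constructor
    · intro h
      rcases hw i with h' | h' | h'
      · exact Or.inl h'
      · exact Or.inr h'
      · exact absurd h' h
    · rintro (h | h) <;> rw [h] <;> norm_num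
  have h4 : ((Finset.univ.filter (fun i => w i = -1))
      ∪ Finset.univ.filter (fun i => w i = 0)).card
      = (Finset.univ.filter (fun i => w i = -1)).card
        + (Finset.univ.filter (fun i => w i = 0)).card := by
    apply Finset.card_union_of_disjoint
    rw [Finset.disjoint_left]
    intro i h1 h2
    rw [Finset.mem_filter] at h1 h2
    linarith [h1.2, h2.2]
  rw [h3, h4] at h2
  simp only [Finset.card_univ, Fintype.card_fin] at h2
  omega

end AuxSylvester


section AuxSymplectic

open Module

/-- `Omega` as a bilinear map. -/
def OmegaL (n : ℕ) : V n →ₗ[ℝ] V n →ₗ[ℝ] ℝ :=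
  LinearMap.mk₂ ℝ (Omega n)
    (fun a b c => by
      simp only [Omega, Prod.fst_add, Prod.snd_add, add_dotProduct,
        dotProduct_add]
      ring)
    (fun r a b => by
      simp only [Omega, Prod.smul_fst, Prod.smul_snd, smul_dotProduct,
        dotProduct_smul, smul_eq_mul]
      ring)
    (fun a b c => by
      simp only [Omega, Prod.fst_add, Prod.snd_add, add_dotProduct,
        dotProduct_add]
      ring)
    (fun r a b => by
      simp only [Omega, Prod.smul_fst, Prod.smul_snd, smul_dotProduct,
        dotProduct_smul, smul_eq_mul]
      ring)

@[simp] lemma OmegaL_apply (n : ℕ) (z w : V n) : OmegaL n z w = Omega n z w := rfl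

@[simp] lemma Omega_zero_left (n : ℕ) (w : V n) : Omega n 0 w = 0 := by
  simp [Omega]

lemma finrank_V (n : ℕ) : Module.finrank ℝ (V n) = 2 * n := by
  rw [Module.finrank_prod]
  simp [Module.finrank_pi]
  ring

/-- A vector σ-orthogonal to a Lagrangian plane lies in it. -/
lemma mem_of_orth {n : ℕ} {L : Submodule ℝ (V n)} (hL : IsLagrangian n L) {v : V n}
    (hv : ∀ x ∈ L, Omega n x v = 0) : v ∈ L := by
  classical
  set f : V n →ₗ[ℝ] Module.Dual ℝ ↥L := L.dualRestrict ∘ₗ (OmegaL n).flip with hf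
  have hginj : Function.Injective (OmegaL n).flip := by
    rw [← LinearMap.ker_eq_bot, LinearMap.ker_eq_bot']
    intro u hu
    have h1 : ∀ x : V n, Omega n x u = 0 := fun x => by
      simpa using LinearMap.ext_iff.mp hu x
    have hu2 : u.2 = 0 := by
      funext i
      have h2 := h1 (Pi.single i 1, 0)
      simpa [Omega, dotProduct_single] using h2
    have hu1 : u.1 = 0 := by
      funext i
      have h2 := h1 (0, Pi.single i 1)
      simpa [Omega, single_dotProduct] using h2
    exact Prod.ext hu1 hu2
  have hgsurj : Function.Surjective (OmegaL n).flip :=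
    (LinearMap.injective_iff_surjective_of_finrank_eq_finrank
      (by rw [Subspace.dual_finrank_eq])).mp hginj
  have hfsurj : Function.Surjective f :=
    (Subspace.dualRestrict_surjective (W := L)).comp hgsurj
  have hrank : finrank ℝ (LinearMap.range f) = n := by
    rw [LinearMap.range_eq_top.mpr hfsurj]
    rw [finrank_top, Subspace.dual_finrank_eq, hL.1]
  have hkerd : finrank ℝ (LinearMap.ker f) = n := by
    have h := LinearMap.finrank_range_add_finrank_ker f
    rw [hrank, finrank_V] at h
    omega
  have hLle : L ≤ LinearMap.ker f := by
    intro x hx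
    rw [LinearMap.mem_ker]
    ext ⟨y, hy⟩
    simpa [hf] using hL.2 y hy x hx
  have hkL : LinearMap.ker f = L :=
    (Submodule.eq_of_le_of_finrank_le hLle (by rw [hkerd, hL.1])).symm
  have hvker : v ∈ LinearMap.ker f := by
    rw [LinearMap.mem_ker]
    ext ⟨y, hy⟩
    simpa [hf] using hv y hy
  rwa [hkL] at hvker

/-- The triple form as a bilinear map on `L × L' × L''`. -/
def tripleB (n : ℕ) (L L' L'' : Submodule ℝ (V n)) :
    (↥L × ↥L' × ↥L'') →ₗ[ℝ] (↥L × ↥L' × ↥L'') →ₗ[ℝ] ℝ :=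
  LinearMap.mk₂ ℝ
    (fun t s => Omega n ↑t.1 ↑s.2.1 + Omega n ↑t.2.1 ↑s.2.2 + Omega n ↑t.2.2 ↑s.1)
    (fun a b c => by
      simp only [Prod.fst_add, Prod.snd_add, Submodule.coe_add, ← OmegaL_apply, map_add,
        LinearMap.add_apply]
      ring)
    (fun r a b => by
      simp only [Prod.smul_fst, Prod.smul_snd, Submodule.coe_smul, ← OmegaL_apply,
        _root_.map_smul, LinearMap.smul_apply, smul_eq_mul]
      ring)
    (fun a b c => by
      simp only [Prod.fst_add, Prod.snd_add, Submodule.coe_add, ← OmegaL_apply, map_add,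
        LinearMap.add_apply]
      ring)
    (fun r a b => by
      simp only [Prod.smul_fst, Prod.smul_snd, Submodule.coe_smul, ← OmegaL_apply,
        _root_.map_smul, LinearMap.smul_apply, smul_eq_mul]
      ring)

/-- The triple form as a quadratic form. -/
def QF (n : ℕ) (L L' L'' : Submodule ℝ (V n)) : QuadraticForm ℝ (↥L × ↥L' × ↥L'') :=
  LinearMap.BilinMap.toQuadraticMap (tripleB n L L' L'')

lemma QF_coe (n : ℕ) (L L' L'' : Submodule ℝ (V n)) :
    ⇑(QF n L L' L'') = tripleForm n L L' L'' := by
  funext t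
  simp [QF, LinearMap.BilinMap.toQuadraticMap_apply, tripleB, tripleForm]

lemma polar_QF (n : ℕ) (L L' L'' : Submodule ℝ (V n)) (t s : ↥L × ↥L' × ↥L'') :
    QuadraticMap.polar ⇑(QF n L L' L'') t s
      = Omega n ↑s.1 (↑t.2.1 - ↑t.2.2) + Omega n ↑s.2.1 (↑t.2.2 - ↑t.1)
        + Omega n ↑s.2.2 (↑t.1 - ↑t.2.1) := by
  simp only [QuadraticMap.polar, QF, LinearMap.BilinMap.toQuadraticMap_apply, tripleB,
    LinearMap.mk₂_apply, Prod.fst_add, Prod.snd_add, Submodule.coe_add, Omega,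
    dotProduct_add, add_dotProduct, Prod.fst_sub, Prod.snd_sub,
    dotProduct_sub, sub_dotProduct, Submodule.coe_sub]
  ring

lemma mem_ker_QF {n : ℕ} {L L' L'' : Submodule ℝ (V n)}
    (hL : IsLagrangian n L) (hL' : IsLagrangian n L') (hL'' : IsLagrangian n L'')
    (t : ↥L × ↥L' × ↥L'') :
    t ∈ LinearMap.ker (QF n L L' L'').polarBilin
      ↔ ((↑t.2.1 - ↑t.2.2 : V n) ∈ L ∧ (↑t.2.2 - ↑t.1 : V n) ∈ L'
          ∧ (↑t.1 - ↑t.2.1 : V n) ∈ L'') := by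
  rw [LinearMap.mem_ker]
  constructor
  · intro h
    have hp : ∀ s, QuadraticMap.polar ⇑(QF n L L' L'') t s = 0 := fun s => by
      rw [← QuadraticMap.polarBilin_apply_apply, h, LinearMap.zero_apply]
    refine ⟨?_, ?_, ?_⟩
    · apply mem_of_orth hL
      intro x hx
      have h1 := hp (⟨x, hx⟩, 0, 0)
      rw [polar_QF] at h1
      simpa using h1
    · apply mem_of_orth hL'
      intro x hx
      have h1 := hp (0, ⟨x, hx⟩, 0)
      rw [polar_QF] at h1
      simpa using h1
    · apply mem_of_orth hL''
      intro x hx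
      have h1 := hp (0, 0, ⟨x, hx⟩)
      rw [polar_QF] at h1
      simpa using h1
  · rintro ⟨h1, h2, h3⟩
    refine LinearMap.ext fun s => ?_
    rw [LinearMap.zero_apply, QuadraticMap.polarBilin_apply_apply, polar_QF,
      hL.2 _ s.1.2 _ h1, hL'.2 _ s.2.1.2 _ h2, hL''.2 _ s.2.2.2 _ h3]
    ring

/-- The comparison map `(L⊓L') × (L⊓L'') × (L'⊓L'') → L × L' × L''`. -/
def PhiAux (n : ℕ) (L L' L'' : Submodule ℝ (V n)) :
    (↥(L ⊓ L') × ↥(L ⊓ L'') × ↥(L' ⊓ L'')) →ₗ[ℝ] (↥L × ↥L' × ↥L'') :=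
  LinearMap.prod
    ((Submodule.inclusion inf_le_left).comp
        (LinearMap.fst ℝ ↥(L ⊓ L') (↥(L ⊓ L'') × ↥(L' ⊓ L'')))
      + (Submodule.inclusion inf_le_left).comp
        ((LinearMap.fst ℝ ↥(L ⊓ L'') ↥(L' ⊓ L'')).comp
          (LinearMap.snd ℝ ↥(L ⊓ L') (↥(L ⊓ L'') × ↥(L' ⊓ L'')))))
    (LinearMap.prod
      ((Submodule.inclusion inf_le_right).comp
          (LinearMap.fst ℝ ↥(L ⊓ L') (↥(L ⊓ L'') × ↥(L' ⊓ L'')))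
        + (Submodule.inclusion inf_le_left).comp
          ((LinearMap.snd ℝ ↥(L ⊓ L'') ↥(L' ⊓ L'')).comp
            (LinearMap.snd ℝ ↥(L ⊓ L') (↥(L ⊓ L'') × ↥(L' ⊓ L'')))))
      ((Submodule.inclusion inf_le_right).comp
          ((LinearMap.fst ℝ ↥(L ⊓ L'') ↥(L' ⊓ L'')).comp
            (LinearMap.snd ℝ ↥(L ⊓ L') (↥(L ⊓ L'') × ↥(L' ⊓ L''))))
        + (Submodule.inclusion inf_le_right).comp
          ((LinearMap.snd ℝ ↥(L ⊓ L'') ↥(L' ⊓ L'')).comp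
            (LinearMap.snd ℝ ↥(L ⊓ L') (↥(L ⊓ L'') × ↥(L' ⊓ L''))))))

lemma PhiAux_apply (n : ℕ) (L L' L'' : Submodule ℝ (V n))
    (p : ↥(L ⊓ L') × ↥(L ⊓ L'') × ↥(L' ⊓ L'')) :
    ((((PhiAux n L L' L'') p).1 : V n) = ↑p.1 + ↑p.2.1)
      ∧ ((((PhiAux n L L' L'') p).2.1 : V n) = ↑p.1 + ↑p.2.2)
      ∧ ((((PhiAux n L L' L'') p).2.2 : V n) = ↑p.2.1 + ↑p.2.2) := by
  refine ⟨?_, ?_, ?_⟩ <;> simp [PhiAux]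

lemma PhiAux_inj (n : ℕ) (L L' L'' : Submodule ℝ (V n)) :
    Function.Injective (PhiAux n L L' L'') := by
  rw [← LinearMap.ker_eq_bot, LinearMap.ker_eq_bot']
  intro p hp
  obtain ⟨h1, h2, h3⟩ := PhiAux_apply n L L' L'' p
  rw [hp] at h1 h2 h3
  simp only [Prod.fst_zero, Prod.snd_zero, Submodule.coe_zero] at h1 h2 h3
  have two0 : (2 : ℝ) ≠ 0 := two_ne_zero
  have ha : (↑p.1 : V n) = 0 := by
    have key : (2 : ℝ) • (↑p.1 : V n)
        = ((↑p.1 : V n) + ↑p.2.1) + ((↑p.1 : V n) + ↑p.2.2) - ((↑p.2.1 : V n) + ↑p.2.2) := by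
      rw [two_smul]; abel
    rw [← h1, ← h2, ← h3] at key
    simp only [sub_self, add_zero, zero_sub, zero_add, sub_zero, neg_zero] at key
    rcases smul_eq_zero.mp key with h | h
    · exact absurd h two0
    · exact h
  have hb : (↑p.2.1 : V n) = 0 := by
    have key : (2 : ℝ) • (↑p.2.1 : V n)
        = ((↑p.1 : V n) + ↑p.2.1) - ((↑p.1 : V n) + ↑p.2.2) + ((↑p.2.1 : V n) + ↑p.2.2) := by
      rw [two_smul]; abel
    rw [← h1, ← h2, ← h3] at key
    simp only [sub_self, add_zero, zero_sub, zero_add, sub_zero, neg_zero] at key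
    rcases smul_eq_zero.mp key with h | h
    · exact absurd h two0
    · exact h
  have hc : (↑p.2.2 : V n) = 0 := by
    have key : (2 : ℝ) • (↑p.2.2 : V n)
        = -(((↑p.1 : V n) + ↑p.2.1)) + ((↑p.1 : V n) + ↑p.2.2) + ((↑p.2.1 : V n) + ↑p.2.2) := by
      rw [two_smul]; abel
    rw [← h1, ← h2, ← h3] at key
    simp only [sub_self, add_zero, zero_sub, zero_add, sub_zero, neg_zero] at key
    rcases smul_eq_zero.mp key with h | h
    · exact absurd h two0
    · exact h
  refine Prod.ext (Subtype.ext (by simpa using ha))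
    (Prod.ext (Subtype.ext (by simpa using hb)) (Subtype.ext (by simpa using hc)))

lemma PhiAux_range {n : ℕ} {L L' L'' : Submodule ℝ (V n)}
    (hL : IsLagrangian n L) (hL' : IsLagrangian n L') (hL'' : IsLagrangian n L'') :
    LinearMap.range (PhiAux n L L' L'') = LinearMap.ker (QF n L L' L'').polarBilin := by
  apply le_antisymm
  · rintro t ⟨p, rfl⟩
    obtain ⟨h1, h2, h3⟩ := PhiAux_apply n L L' L'' p
    rw [mem_ker_QF hL hL' hL'']
    refine ⟨?_, ?_, ?_⟩
    · rw [h2, h3]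
      have he : ((↑p.1 : V n) + ↑p.2.2) - ((↑p.2.1 : V n) + ↑p.2.2)
          = (↑p.1 : V n) - ↑p.2.1 := by abel
      rw [he]
      exact sub_mem (Submodule.mem_inf.mp p.1.2).1 (Submodule.mem_inf.mp p.2.1.2).1
    · rw [h3, h1]
      have he : ((↑p.2.1 : V n) + ↑p.2.2) - ((↑p.1 : V n) + ↑p.2.1)
          = (↑p.2.2 : V n) - ↑p.1 := by abel
      rw [he]
      exact sub_mem (Submodule.mem_inf.mp p.2.2.2).1 (Submodule.mem_inf.mp p.1.2).2
    · rw [h1, h2]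
      have he : ((↑p.1 : V n) + ↑p.2.1) - ((↑p.1 : V n) + ↑p.2.2)
          = (↑p.2.1 : V n) - ↑p.2.2 := by abel
      rw [he]
      exact sub_mem (Submodule.mem_inf.mp p.2.1.2).2 (Submodule.mem_inf.mp p.2.2.2).2
  · intro t ht
    rw [mem_ker_QF hL hL' hL''] at ht
    obtain ⟨h1, h2, h3⟩ := ht
    set x : V n := ↑t.1 with hx
    set y : V n := ↑t.2.1 with hy
    set z : V n := ↑t.2.2 with hz
    have ha1 : (2 : ℝ)⁻¹ • (x + y - z) ∈ L := by
      have he : x + y - z = x + (y - z) := by abel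
      rw [he]
      exact Submodule.smul_mem _ _ (add_mem t.1.2 h1)
    have ha2 : (2 : ℝ)⁻¹ • (x + y - z) ∈ L' := by
      have he : x + y - z = y - (z - x) := by abel
      rw [he]
      exact Submodule.smul_mem _ _ (sub_mem t.2.1.2 h2)
    have hb1 : (2 : ℝ)⁻¹ • (x - y + z) ∈ L := by
      have he : x - y + z = x - (y - z) := by abel
      rw [he]
      exact Submodule.smul_mem _ _ (sub_mem t.1.2 h1)
    have hb2 : (2 : ℝ)⁻¹ • (x - y + z) ∈ L'' := by
      have he : x - y + z = z + (x - y) := by abel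
      rw [he]
      exact Submodule.smul_mem _ _ (add_mem t.2.2.2 h3)
    have hc1 : (2 : ℝ)⁻¹ • (-x + y + z) ∈ L' := by
      have he : -x + y + z = y + (z - x) := by abel
      rw [he]
      exact Submodule.smul_mem _ _ (add_mem t.2.1.2 h2)
    have hc2 : (2 : ℝ)⁻¹ • (-x + y + z) ∈ L'' := by
      have he : -x + y + z = z - (x - y) := by abel
      rw [he]
      exact Submodule.smul_mem _ _ (sub_mem t.2.2.2 h3)
    refine ⟨(⟨_, Submodule.mem_inf.mpr ⟨ha1, ha2⟩⟩,
      ⟨_, Submodule.mem_inf.mpr ⟨hb1, hb2⟩⟩,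
      ⟨_, Submodule.mem_inf.mpr ⟨hc1, hc2⟩⟩), ?_⟩
    obtain ⟨g1, g2, g3⟩ := PhiAux_apply n L L' L''
      (⟨_, Submodule.mem_inf.mpr ⟨ha1, ha2⟩⟩,
        ⟨_, Submodule.mem_inf.mpr ⟨hb1, hb2⟩⟩,
        ⟨_, Submodule.mem_inf.mpr ⟨hc1, hc2⟩⟩)
    refine Prod.ext (Subtype.ext ?_) (Prod.ext (Subtype.ext ?_) (Subtype.ext ?_))
    · rw [g1]
      show (2 : ℝ)⁻¹ • (x + y - z) + (2 : ℝ)⁻¹ • (x - y + z) = x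
      module
    · rw [g2]
      show (2 : ℝ)⁻¹ • (x + y - z) + (2 : ℝ)⁻¹ • (-x + y + z) = y
      module
    · rw [g3]
      show (2 : ℝ)⁻¹ • (x - y + z) + (2 : ℝ)⁻¹ • (-x + y + z) = z
      module

lemma finrank_ker_QF {n : ℕ} {L L' L'' : Submodule ℝ (V n)}
    (hL : IsLagrangian n L) (hL' : IsLagrangian n L') (hL'' : IsLagrangian n L'') :
    Module.finrank ℝ (LinearMap.ker (QF n L L' L'').polarBilin)
      = Module.finrank ℝ ↥(L ⊓ L') + Module.finrank ℝ ↥(L ⊓ L'')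
        + Module.finrank ℝ ↥(L' ⊓ L'') := by
  rw [← PhiAux_range hL hL' hL'',
    LinearMap.finrank_range_of_inj (PhiAux_inj n L L' L'')]
  rw [Module.finrank_prod, Module.finrank_prod]
  ring

end AuxSymplectic


/-- τ(ℓ,ℓ',ℓ'') ≡ n + ∂dim(ℓ,ℓ',ℓ'') (mod 2). -/
theorem tau_mod_two (n : ℕ) (L L' L'' : Submodule ℝ (V n))
    (hL : IsLagrangian n L) (hL' : IsLagrangian n L') (hL'' : IsLagrangian n L'') :
    tau n L L' L'' ≡ (n : ℤ) + ddim n L L' L'' [ZMOD 2] := by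
  have hQ := sylvester_rank (QF n L L' L'')
  have hE : Module.finrank ℝ (↥L × ↥L' × ↥L'') = 3 * n := by
    rw [Module.finrank_prod, Module.finrank_prod, hL.1, hL'.1, hL''.1]
    ring
  rw [hE, finrank_ker_QF hL hL' hL'', QF_coe] at hQ
  unfold tau ddim negIndex at *
  unfold Int.ModEq
  omega
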